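/- Let p be a prime, let G be a nonabelian finite p-group whose center Z(G) is cyclic, let y ∈ Z₁(G) \ Z(G), and let x ∈ G be such that z := [x,y] generates the subgroup [G,y] = {[g,y] : g ∈ G} of Z(G), which has order p^r with r ≥ 1. Let G₀ be the centralizer of y in G and let A be the subgroup generated by {y} ∪ Z(G) (an abelian normal subgroup of G). Let χ : A → ℂˣ be a group homomorphism (a character) whose restriction to the subgroup generated by z is injective. Then the stabilizer of χ under the dual action of G, namely {g ∈ G : χ(g⁻¹ a g) = χ(a) for all a ∈ A}, equals G₀. -/

import Mathlib

/-- The commutator `[x,y] = x⁻¹y⁻¹xy`. -/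
def comm' {G : Type*} [Group G] (x y : G) : G := x⁻¹ * y⁻¹ * x * y

/-- For a nonabelian finite `p`-group `G` with cyclic center, `y ∈ Z₁(G) \ Z(G)`, and
`x ∈ G` with `z = [x,y]` generating `[G,y]` (of order `p^r`, `r ≥ 1`): if `χ` is a
character of the abelian normal subgroup `A = ⟨y, Z(G)⟩` that is injective on the subgroup
generated by `z`, then the stabilizer of `χ` under the dual action of `G` is exactly the
centralizer `G₀` of `y`. -/
theorem dual_action_stabilizer_eq_centralizer
    {p : ℕ} (hp : p.Prime) {G : Type*} [Group G] [Finite G] (hpG : IsPGroup p G)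
    (hna : ¬ ∀ a b : G, a * b = b * a)
    (hcyc : IsCyclic (Subgroup.center G))
    (y : G)
    (hy1 : (QuotientGroup.mk y : G ⧸ Subgroup.center G) ∈
      Subgroup.center (G ⧸ Subgroup.center G))
    (hy2 : y ∉ Subgroup.center G)
    (K : Subgroup G) (hK : (K : Set G) = {z : G | ∃ g : G, comm' g y = z})
    (hKZ : K ≤ Subgroup.center G)
    (r : ℕ) (hr : 1 ≤ r) (hcard : Nat.card K = p ^ r)
    (x : G) (hx : Subgroup.zpowers (comm' x y) = K)
    (A : Subgroup G) (hA : A = Subgroup.closure ({y} ∪ (Subgroup.center G : Set G)))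
    (hAnormal : A.Normal)
    (χ : A →* ℂˣ)
    (hχ : ∀ a b : A, (a : G) ∈ Subgroup.zpowers (comm' x y) →
      (b : G) ∈ Subgroup.zpowers (comm' x y) → χ a = χ b → a = b) :
    {g : G | ∀ (a : G) (ha : a ∈ A) (hga : g⁻¹ * a * g ∈ A),
        χ ⟨g⁻¹ * a * g, hga⟩ = χ ⟨a, ha⟩} =
      (Subgroup.centralizer {y} : Set G) := by
  have hZA : (Subgroup.center G : Set G) ⊆ (A : Set G) := by
    rw [hA]; intro c hc; exact Subgroup.subset_closure (Or.inr hc)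
  have hyA : y ∈ A := by
    rw [hA]; exact Subgroup.subset_closure (Or.inl rfl)
  ext g
  simp only [Set.mem_setOf_eq, SetLike.mem_coe]
  constructor
  · intro hg
    rw [Subgroup.mem_centralizer_iff]
    intro h hh
    rw [Set.mem_singleton_iff] at hh; rw [hh]
    set c : G := comm' g y with hcdef
    have hcK : c ∈ K := by
      rw [← SetLike.mem_coe, hK]; exact ⟨g, rfl⟩
    have hcZ : c ∈ Subgroup.center G := hKZ hcK
    have hcA : c ∈ A := hZA hcZ
    have hconj : g⁻¹ * y * g = y * c⁻¹ := by
      rw [hcdef]; unfold comm'; group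
    have hgyA : g⁻¹ * y * g ∈ A := by
      rw [hconj]; exact A.mul_mem hyA (A.inv_mem hcA)
    have h1 := hg y hyA hgyA
    have hsplit : (⟨g⁻¹ * y * g, hgyA⟩ : A) = ⟨y, hyA⟩ * ⟨c⁻¹, A.inv_mem hcA⟩ := by
      ext; simpa using hconj
    rw [hsplit, map_mul] at h1
    have h2 : χ ⟨c⁻¹, A.inv_mem hcA⟩ = χ 1 := by
      rw [map_one]; exact mul_eq_left.mp h1
    have hmem1 : ((⟨c⁻¹, A.inv_mem hcA⟩ : A) : G) ∈ Subgroup.zpowers (comm' x y) := by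
      rw [hx]; exact K.inv_mem hcK
    have hmem2 : ((1 : A) : G) ∈ Subgroup.zpowers (comm' x y) := by
      exact Subgroup.one_mem _
    have h3 : (⟨c⁻¹, A.inv_mem hcA⟩ : A) = 1 := hχ _ _ hmem1 hmem2 h2
    have h4 : c = 1 := by
      have : c⁻¹ = (1 : G) := congrArg Subtype.val h3
      simpa using this
    have h5 : g⁻¹ * y⁻¹ * g * y = 1 := by rw [← h4, hcdef]; rfl
    calc y * g = y * g * (g⁻¹ * y⁻¹ * g * y) := by rw [h5, mul_one]
      _ = g * y := by group
  · intro hg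
    have hgy : y * g = g * y := Subgroup.mem_centralizer_iff.mp hg y rfl
    have hle : A ≤ Subgroup.centralizer {g} := by
      rw [hA]
      apply (Subgroup.closure_le _).mpr
      intro s hs
      rw [SetLike.mem_coe, Subgroup.mem_centralizer_iff]
      intro h hh
      rw [Set.mem_singleton_iff] at hh; rw [hh]
      rcases hs with hs | hs
      · rw [Set.mem_singleton_iff] at hs; subst hs
        exact hgy.symm
      · exact Subgroup.mem_center_iff.mp hs g
    intro a ha hga
    have hcomm : g * a = a * g := Subgroup.mem_centralizer_iff.mp (hle ha) g rfl
    have : g⁻¹ * a * g = a := by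
      rw [mul_assoc, ← hcomm]; group
    exact congrArg χ (Subtype.ext this)
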